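/- Let K be a field and let (π_i : L → L_i)_{i ∈ I} be a limit cone of a codirected diagram of K-vector spaces. For every injective linear map q : Q → L with Q finite-dimensional, there exists i ∈ I such that π_i ∘ q is injective. -/

import Mathlib

open CategoryTheory Limits

theorem stmt2 {K : Type u} [Field K] {I : Type u} [PartialOrder I]
    (hcod : ∀ s : Finset I, ∃ j : I, ∀ i ∈ s, j ≤ i)
    (D : I ⥤ ModuleCat.{u} K) (c : Cone D) (hc : IsLimit c)
    (Q : Type u) [AddCommGroup Q] [Module K Q] [FiniteDimensional K Q]
    (q : Q →ₗ[K] c.pt) (hq : Function.Injective q) :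
    ∃ i : I, Function.Injective (fun z : Q => c.π.app i (q z)) := by
  obtain ⟨i₀, -⟩ := hcod ∅
  set N : I → Submodule K Q := fun i =>
    LinearMap.ker ((c.π.app i).hom ∘ₗ q) with hN
  have hmono : ∀ {k j : I}, k ≤ j → N k ≤ N j := by
    intro k j hkj x hx
    have hx' : c.π.app k (q x) = 0 := hx
    have hw := c.w (homOfLE hkj)
    have heq : c.π.app j (q x) = (D.map (homOfLE hkj)) (c.π.app k (q x)) := by
      rw [← hw]; rfl
    show c.π.app j (q x) = 0
    rw [heq, hx', map_zero]
  -- choose i with minimal finrank of N i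
  have hmem : Module.finrank K (N i₀) ∈ Set.range fun i => Module.finrank K (N i) := ⟨i₀, rfl⟩
  have hmin := Nat.sInf_mem ⟨_, hmem⟩
  obtain ⟨i, hi⟩ := hmin
  refine ⟨i, ?_⟩
  -- show N i = ⊥
  have hbot : N i = ⊥ := by
    rw [Submodule.eq_bot_iff]
    classical
    intro x hx
    have hall : ∀ j, c.π.app j (q x) = 0 := by
      intro j
      obtain ⟨k, hk⟩ := hcod {i, j}
      have hki : k ≤ i := hk i (Finset.mem_insert_self _ _)
      have hkj : k ≤ j := hk j (Finset.mem_insert_of_mem (Finset.mem_singleton_self _))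
      have hle : N k ≤ N i := hmono hki
      have : N k = N i := by
        apply Submodule.eq_of_le_of_finrank_le hle
        calc Module.finrank K (N i) = sInf (Set.range fun i => Module.finrank K (N i)) := hi
          _ ≤ _ := Nat.sInf_le ⟨k, rfl⟩
      have hxk : x ∈ N k := this ▸ hx
      exact hmono hkj hxk
    have : q x = q 0 := by
      rw [map_zero]
      refine Concrete.isLimit_ext D hc (q x) 0 (fun j => ?_)
      have h1 : (c.π.app j) (q x) = 0 := hall j
      have h2 : (c.π.app j) (0 : c.pt) = 0 := map_zero _
      exact h1.trans h2.symm
    simpa using hq this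
  intro a b hab
  have : a - b ∈ N i := by
    show c.π.app i (q (a - b)) = 0
    simp only [map_sub]
    simpa [sub_eq_zero] using hab
  rw [hbot, Submodule.mem_bot] at this
  exact sub_eq_zero.mp this
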